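/- For every natural number N, the constant coefficient (coefficient of u^0) of the Laurent polynomial (2 - u - u^{-1}) · (u + u^{-1} - 2)^N in ℤ[u, u^{-1}] equals (-1)^N · binomial(2N+2, N+1). -/

import Mathlib

open LaurentPolynomial

/-- The constant coefficient of `(2 - u - u⁻¹) · (u + u⁻¹ - 2)^N` in `ℤ[u,u⁻¹]`
equals `(-1)^N · C(2N+2, N+1)`. -/
theorem stmt2 (N : ℕ) :
    ((2 - T 1 - T (-1)) * (T 1 + T (-1) - 2) ^ N : LaurentPolynomial ℤ).coeff 0 =
      (-1) ^ N * ((2 * N + 2).choose (N + 1) : ℤ) := by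
  have hT : (T (-1) * T 1 : LaurentPolynomial ℤ) = 1 := by
    rw [← T_add]; norm_num
  have h1 : (T 1 + T (-1) - 2 : LaurentPolynomial ℤ) = T (-1) * (T 1 - 1) ^ 2 := by
    have : (T (-1) * (T 1 - 1) ^ 2 : LaurentPolynomial ℤ)
        = T (-1) * T 1 * T 1 - 2 * (T (-1) * T 1) + T (-1) := by ring
    rw [this, hT]; ring
  have key : ((2 - T 1 - T (-1)) * (T 1 + T (-1) - 2) ^ N : LaurentPolynomial ℤ)
      = - (T (-(N+1) : ℤ) *
          Polynomial.toLaurent ((Polynomial.X + Polynomial.C (-1 : ℤ)) ^ (2*N+2))) := by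
    have h2 : ((2 - T 1 - T (-1)) * (T 1 + T (-1) - 2) ^ N : LaurentPolynomial ℤ)
        = - (T 1 + T (-1) - 2) ^ (N+1) := by ring
    rw [h2, h1, mul_pow, T_pow]
    have h3 : Polynomial.toLaurent ((Polynomial.X + Polynomial.C (-1 : ℤ)) ^ (2*N+2))
        = (T 1 - 1 : LaurentPolynomial ℤ) ^ (2*N+2) := by
      rw [map_pow, map_add, Polynomial.toLaurent_X, Polynomial.toLaurent_C]
      simp [sub_eq_add_neg]
    rw [h3, ← pow_mul,
      show ((N+1:ℕ):ℤ)*(-1) = -((N:ℤ)+1) from by push_cast; ring,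
      show 2*(N+1) = 2*N+2 from by ring]
  rw [key]
  have h4 : ((T (-(N+1) : ℤ) *
      Polynomial.toLaurent ((Polynomial.X + Polynomial.C (-1 : ℤ)) ^ (2*N+2))
      : LaurentPolynomial ℤ)).coeff 0
      = ((Polynomial.X + Polynomial.C (-1 : ℤ)) ^ (2*N+2)).coeff (N+1) := by
    unfold T; rw [AddMonoidAlgebra.coeff_single_mul_apply, one_mul]
    have : (-(-(N+1 : ℤ)) + 0) = ((N+1 : ℕ) : ℤ) := by push_cast; ring
    rw [this, coeff_toLaurent]
    erw [Finsupp.mapDomain_apply Nat.castEmbedding.injective]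
    rfl
  rw [AddMonoidAlgebra.coeff_neg, Finsupp.neg_apply, h4, Polynomial.coeff_X_add_C_pow]
  have : 2*N+2 - (N+1) = N+1 := by omega
  rw [this]
  ring_nf
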